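/- arXiv:2010.13390 — 2 statements merged into one kernel-verified Lean document; each statement's English description precedes it below -/
import Mathlib

section
/- Under the embedding of R = ℤ_(p) C_p into S ⊕ T = ℤ_(p) ⊕ ℤ_(p)[ζ_p] given by x ↦ (x·e₁, x·e_ζ), the image of R equals the set of pairs (x, y) with x ≡ y modulo the maximal ideals, i.e. x + pℤ_(p) = y + πℤ_(p)[ζ_p] under the natural identifications ℤ_(p)/(p) ≅ 𝔽_p ≅ ℤ_(p)[ζ_p]/(π), where π = 1 - ζ_p. -/
open scoped BigOperators

def Zsub (p : ℕ) [Fact p.Prime] : Subring ℚ where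
  carrier := {x : ℚ | ¬ (p ∣ x.den)}
  zero_mem' := by simp [Nat.Prime.ne_one (Fact.out (p := p.Prime))]
  one_mem' := by simp [Nat.Prime.ne_one (Fact.out (p := p.Prime))]
  add_mem' := by
    intro a b ha hb hd
    rcases (Nat.Prime.dvd_mul (Fact.out (p := p.Prime))).1
      (hd.trans (Rat.add_den_dvd a b)) with h | h
    exacts [ha h, hb h]
  mul_mem' := by
    intro a b ha hb hd
    rcases (Nat.Prime.dvd_mul (Fact.out (p := p.Prime))).1
      (hd.trans (Rat.mul_den_dvd a b)) with h | h
    exacts [ha h, hb h]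
  neg_mem' := by intro a ha; simpa using ha

abbrev Cp (p : ℕ) := Multiplicative (ZMod p)

def sigmaGen (p : ℕ) : Cp p := Multiplicative.ofAdd (1 : ZMod p)

/-- The group ring `R = ℤ_(p) C_p`. -/
abbrev Rgrp (p : ℕ) [Fact p.Prime] := MonoidAlgebra (Zsub p) (Cp p)

/-- The ring `T = ℤ_(p)[ζ_p]`, realized by adjoining a root of the `p`-th
cyclotomic polynomial to `ℤ_(p)`. -/
abbrev Tring (p : ℕ) [Fact p.Prime] := AdjoinRoot (Polynomial.cyclotomic p (Zsub p))

/-- `ζ_p` as an element of `T`. -/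
noncomputable def zetaT (p : ℕ) [Fact p.Prime] : Tring p :=
  AdjoinRoot.root (Polynomial.cyclotomic p (Zsub p))

section Aux

variable (p : ℕ) [Fact p.Prime]

lemma exists_int_residue (a : Zsub p) :
    ∃ z : ℤ, ∃ s : Zsub p, a - (z : Zsub p) = (p : Zsub p) * s := by
  have hp : p.Prime := Fact.out
  obtain ⟨r, hr⟩ := a
  have hden : ((r.den : ZMod p)) ≠ 0 := by
    simpa [ZMod.natCast_eq_zero_iff] using (show ¬ (p ∣ r.den) from hr)
  set u : ZMod p := ((r.den : ZMod p))⁻¹ with hu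
  set b : ℤ := (u.val : ℤ) with hb
  have hmod : (p : ℤ) ∣ (1 - r.den * b) := by
    have : ((1 - r.den * b : ℤ) : ZMod p) = 0 := by
      push_cast
      rw [hb]
      push_cast
      rw [ZMod.natCast_val, ZMod.cast_id]
      rw [hu, mul_inv_cancel₀ hden]
      ring
    exact (ZMod.intCast_zmod_eq_zero_iff_dvd _ p).mp this
  obtain ⟨m, hm⟩ := hmod
  refine ⟨r.num * b, ⟨(r.num * m : ℚ) / (r.den : ℚ), ?_⟩, ?_⟩
  · intro hd
    apply hr
    have hdvd : (((r.num * m : ℚ) / (r.den : ℚ)).den : ℤ) ∣ (r.den : ℤ) := by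
      rw [show ((r.num : ℚ) * m) = ((r.num * m : ℤ) : ℚ) by push_cast; ring,
        show ((r.den : ℚ)) = ((r.den : ℤ) : ℚ) by push_cast; ring, ← Rat.divInt_eq_div]
      exact Rat.den_dvd _ _
    exact hd.trans (Int.natCast_dvd_natCast.mp hdvd)
  · apply Subtype.ext
    push_cast
    have hden0 : (r.den : ℚ) ≠ 0 := by positivity
    have hnum : (r.num : ℚ) / (r.den : ℚ) = r := by exact_mod_cast Rat.num_div_den r
    field_simp
    rw [div_eq_iff hden0] at hnum
    have h2 : ((1 : ℚ)) - r.den * b = p * m := by exact_mod_cast hm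
    linear_combination (-1 : ℚ) * hnum + (r.num : ℚ) * h2

lemma sum_zeta : ∑ i ∈ Finset.range p, (zetaT p) ^ i = 0 := by
  have h : Polynomial.aeval (zetaT p)
      ((∑ i ∈ Finset.range p, Polynomial.X ^ i : Polynomial (Zsub p))) = 0 := by
    rw [← Polynomial.cyclotomic_prime (Zsub p) p, zetaT, AdjoinRoot.aeval_eq, AdjoinRoot.mk_self]
  simpa using h

lemma dvd_pT : (1 - zetaT p) ∣ (p : Tring p) := by
  have h : (p : Tring p) = ∑ i ∈ Finset.range p, (1 - (zetaT p) ^ i) := by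
    rw [Finset.sum_sub_distrib, sum_zeta, Finset.sum_const, Finset.card_range]
    simp
  rw [h]
  refine Finset.dvd_sum fun i _ => ?_
  simpa using sub_dvd_pow_sub_pow (1 : Tring p) (zetaT p) i

lemma dvd_zpow (n : ℕ) : (1 - zetaT p) ∣ ((zetaT p) ^ n - 1) := by
  have h := sub_dvd_pow_sub_pow (1 : Tring p) (zetaT p) n
  simp only [one_pow] at h
  exact (neg_sub (1 : Tring p) ((zetaT p) ^ n)) ▸ h.neg_right

end Aux

set_option maxHeartbeats 2000000 in
set_option synthInstance.maxHeartbeats 1000000 in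
/-- Under the embedding of `R = ℤ_(p) C_p` into `S ⊕ T = ℤ_(p) ⊕ ℤ_(p)[ζ_p]`
(the `ℤ_(p)`-algebra map sending `σ` to `(1, ζ_p)`, i.e. `x ↦ (x·e₁, x·e_ζ)`),
the image of `R` is exactly the set of pairs `(x, y)` that are congruent modulo
the maximal ideals `(p)` of `S` and `(π) = (1 - ζ_p)` of `T`, i.e. pairs whose
residues agree in `ℤ_(p)/(p) ≅ 𝔽_p ≅ ℤ_(p)[ζ_p]/(π)` (equivalently, both
residues are represented by a common integer `z`). -/
theorem stmt2 (p : ℕ) [Fact p.Prime]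
    (φ : Rgrp p →ₐ[Zsub p] (Zsub p) × Tring p)
    (hφ : φ (MonoidAlgebra.of (Zsub p) (Cp p) (sigmaGen p)) = (1, zetaT p)) :
    ∀ q : (Zsub p) × Tring p,
      q ∈ Set.range φ ↔
        ∃ z : ℤ, q.1 - (z : Zsub p) ∈ Ideal.span {(p : Zsub p)} ∧
          q.2 - (z : Tring p) ∈ Ideal.span {1 - zetaT p} := by
  intro q
  have hp : p.Prime := Fact.out
  haveI : NeZero p := ⟨hp.pos.ne'⟩
  set σR : Rgrp p := MonoidAlgebra.of (Zsub p) (Cp p) (sigmaGen p) with hσ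
  constructor
  · rintro ⟨r, rfl⟩
    induction r using MonoidAlgebra.induction_on with
    | of g =>
        set n : ℕ := (Multiplicative.toAdd g).val with hn
        have hg : g = (sigmaGen p) ^ n := by
          have h1 : (sigmaGen p) ^ n = Multiplicative.ofAdd ((n : ZMod p)) := by
            rw [sigmaGen, ← ofAdd_nsmul]
            congr 1
            simp
          rw [h1, hn]
          simp [ZMod.natCast_val, ZMod.cast_id]
        have hφg : φ (MonoidAlgebra.of (Zsub p) (Cp p) g) = (1, (zetaT p) ^ n) := by
          rw [hg, map_pow, map_pow, hφ, Prod.pow_mk, one_pow]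
        refine ⟨1, ?_, ?_⟩
        · rw [hφg]
          simp
        · rw [hφg]
          exact Ideal.mem_span_singleton.2 (by simpa using dvd_zpow p n)
    | add f g hf hg =>
        obtain ⟨z1, h11, h12⟩ := hf
        obtain ⟨z2, h21, h22⟩ := hg
        refine ⟨z1 + z2, ?_, ?_⟩
        · have e : (φ (f + g)).1 - ((z1 + z2 : ℤ) : Zsub p)
              = ((φ f).1 - (z1 : Zsub p)) + ((φ g).1 - (z2 : Zsub p)) := by
            rw [map_add, Prod.fst_add]; push_cast; ring
          rw [e]; exact add_mem h11 h21
        · have e : (φ (f + g)).2 - ((z1 + z2 : ℤ) : Tring p)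
              = ((φ f).2 - (z1 : Tring p)) + ((φ g).2 - (z2 : Tring p)) := by
            rw [map_add, Prod.snd_add]; push_cast; ring
          rw [e]; exact add_mem h12 h22
    | smul r f hf =>
        obtain ⟨z, h1, h2⟩ := hf
        obtain ⟨w, s, hws⟩ := exists_int_residue p r
        refine ⟨w * z, ?_, ?_⟩
        · have e : (φ (r • f)).1 - ((w * z : ℤ) : Zsub p)
              = r * ((φ f).1 - (z : Zsub p)) + (z : Zsub p) * (r - (w : Zsub p)) := by
            rw [map_smul, Prod.smul_fst, smul_eq_mul]; push_cast; ring
          rw [e, hws]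
          exact add_mem (Ideal.mul_mem_left _ _ h1)
            (Ideal.mul_mem_left _ _ (Ideal.mem_span_singleton.2 (Dvd.intro s rfl)))
        · have hmap : algebraMap (Zsub p) (Tring p) r - ((w : ℤ) : Tring p)
              = (p : Tring p) * algebraMap (Zsub p) (Tring p) s := by
            rw [← map_intCast (algebraMap (Zsub p) (Tring p)) w, ← map_sub, hws, map_mul,
              map_natCast]
          have e : (φ (r • f)).2 - ((w * z : ℤ) : Tring p)
              = algebraMap (Zsub p) (Tring p) r * ((φ f).2 - (z : Tring p))
                + (z : Tring p) * (algebraMap (Zsub p) (Tring p) r - ((w : ℤ) : Tring p)) := by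
            rw [map_smul, Prod.smul_snd, Algebra.smul_def]; push_cast; ring
          rw [e, hmap]
          refine add_mem (Ideal.mul_mem_left _ _ h2) (Ideal.mul_mem_left _ _ ?_)
          exact Ideal.mem_span_singleton.2 ((dvd_pT p).mul_right _)
  · rintro ⟨z, h1, h2⟩
    obtain ⟨s, hs⟩ := Ideal.mem_span_singleton.1 h1
    obtain ⟨t, ht⟩ := Ideal.mem_span_singleton.1 h2
    -- surjectivity of the second component
    obtain ⟨rt, hrt⟩ : ∃ r : Rgrp p, (φ r).2 = t := by
      have htop := AdjoinRoot.adjoinRoot_eq_top (f := Polynomial.cyclotomic p (Zsub p))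
      have hle : Algebra.adjoin (Zsub p) ({zetaT p} : Set (Tring p))
          ≤ ((AlgHom.snd (Zsub p) (Zsub p) (Tring p)).comp φ).range := by
        rw [Algebra.adjoin_le_iff, Set.singleton_subset_iff]
        refine ⟨σR, ?_⟩
        show (AlgHom.snd (Zsub p) (Zsub p) (Tring p)) (φ σR) = zetaT p
        rw [hφ]
        rfl
      have : t ∈ ((AlgHom.snd (Zsub p) (Zsub p) (Tring p)).comp φ).range := by
        apply hle
        rw [zetaT, htop]
        trivial
      obtain ⟨r, hr⟩ := this
      exact ⟨r, hr⟩
    have hsum : φ (∑ k ∈ Finset.range p, σR ^ k) = ((p : Zsub p), (0 : Tring p)) := by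
      rw [map_sum]
      have : ∀ k, φ (σR ^ k) = ((1 : Zsub p), (zetaT p) ^ k) := by
        intro k
        rw [map_pow, hσ, hφ, Prod.pow_mk, one_pow]
      rw [Finset.sum_congr rfl fun k _ => this k]
      refine Prod.ext ?_ ?_
      · rw [Prod.fst_sum]
        simp
      · rw [Prod.snd_sum]
        simpa using sum_zeta p
    refine ⟨(z : Rgrp p) + s • (∑ k ∈ Finset.range p, σR ^ k) + (1 - σR) * rt, ?_⟩
    have hz : φ ((z : ℤ) : Rgrp p) = ((z : Zsub p), (z : Tring p)) := by
      rw [map_intCast]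
      ext <;> simp
    have hone : φ ((1 : Rgrp p) - σR) = ((0 : Zsub p), 1 - zetaT p) := by
      rw [map_sub, map_one, hσ, hφ]
      ext <;> simp
    rw [map_add, map_add, map_smul, hsum, hz, map_mul, hone]
    ext
    · simp only [Prod.fst_add, Prod.smul_fst, Prod.fst_mul, smul_eq_mul]
      rw [zero_mul]
      have : q.1 = (z : Zsub p) + (p : Zsub p) * s := by linear_combination hs
      rw [this]; ring
    · simp only [Prod.snd_add, Prod.smul_snd, Prod.snd_mul, smul_zero]
      have : q.2 = (z : Tring p) + (1 - zetaT p) * t := by linear_combination ht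
      rw [this, hrt]; ring
end

section
/- The group ring R = ℤ_(p) C_p is a local ring whose unique maximal ideal is its Jacobson radical J(R), which under the identification R ⊆ S ⊕ T = ℤ_(p) ⊕ ℤ_(p)[ζ_p] equals pS ⊕ πT where π = 1 - ζ_p. -/
open scoped BigOperators

set_option synthInstance.maxHeartbeats 1000000
set_option maxHeartbeats 1600000

variable (p : ℕ) [Fact p.Prime]

lemma coe_natCast_Zsub : ((p : Zsub p) : ℚ) = (p : ℚ) := by push_cast; ring

lemma p_nonunit : ¬ IsUnit ((p : Zsub p)) := by
  intro h
  rcases h.exists_right_inv with ⟨b, hb⟩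
  have hp : p.Prime := Fact.out
  have hq : ((p : Zsub p) : ℚ) * (b : ℚ) = 1 := by exact_mod_cast congrArg Subtype.val hb
  rw [coe_natCast_Zsub] at hq
  have hp0 : (p : ℚ) ≠ 0 := by exact_mod_cast hp.ne_zero
  have hbv : (b : ℚ) = ((p : ℚ))⁻¹ := by field_simp at hq ⊢; linarith
  have : ((p:ℚ)⁻¹).den = p := Rat.inv_natCast_den_of_pos hp.pos
  exact b.2 (by rw [hbv, this])

lemma unit_of_num {a : Zsub p} (h : ¬ ((p:ℤ) ∣ (a:ℚ).num)) : IsUnit a := by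
  have hp : p.Prime := Fact.out
  have hnum : (a:ℚ).num ≠ 0 := fun h0 => h (h0 ▸ dvd_zero _)
  have ha0 : (a:ℚ) ≠ 0 := by
    intro h0; exact hnum (by rw [h0]; rfl)
  have hmem : (a:ℚ)⁻¹ ∈ Zsub p := by
    intro hd
    apply h
    have := Rat.den_dvd ((a:ℚ).den : ℤ) ((a:ℚ).num)
    rw [← Rat.inv_def] at this
    exact dvd_trans (Int.natCast_dvd_natCast.2 hd) this
  refine IsUnit.of_mul_eq_one (a := a) ⟨(a:ℚ)⁻¹, hmem⟩ ?_
  ext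
  push_cast
  exact mul_inv_cancel₀ ha0

lemma p_dvd_of_nonunit {a : Zsub p} (h : ¬ IsUnit a) : (p : Zsub p) ∣ a := by
  have hp : p.Prime := Fact.out
  rcases (em ((p:ℤ) ∣ (a:ℚ).num)) with hnum | hnum
  · rcases hnum with ⟨m, hm⟩
    have hp0 : ((p:ℚ)) ≠ 0 := by exact_mod_cast hp.ne_zero
    have hden0 : (((a:ℚ).den : ℤ) : ℚ) ≠ 0 := by exact_mod_cast (a:ℚ).den_nz
    have hkey : ((a:ℚ)/(p:ℚ)) = Rat.divInt m ((a:ℚ).den) := by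
      rw [Rat.divInt_eq_div, div_eq_div_iff hp0 hden0]
      have h1 : (a:ℚ) * ((a:ℚ).den : ℚ) = ((a:ℚ).num : ℚ) := by
        rw [mul_comm, Rat.den_mul_eq_num]
      push_cast at h1 ⊢
      rw [h1, hm]; push_cast; ring
    have hdvd : (((a:ℚ)/(p:ℚ)).den : ℤ) ∣ ((a:ℚ).den : ℤ) := hkey ▸ Rat.den_dvd m ((a:ℚ).den)
    have hmem : ((a:ℚ)/(p:ℚ)) ∈ Zsub p := by
      intro hd
      exact a.2 (Int.natCast_dvd_natCast.1 (dvd_trans (Int.natCast_dvd_natCast.2 hd) hdvd))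
    refine ⟨⟨(a:ℚ)/(p:ℚ), hmem⟩, ?_⟩
    ext
    push_cast
    field_simp
  · exact (h (unit_of_num p hnum)).elim

instance Zsub_local : IsLocalRing (Zsub p) := by
  apply IsLocalRing.of_nonunits_add
  intro a b ha hb hu
  rcases p_dvd_of_nonunit p ha with ⟨a0, rfl⟩
  rcases p_dvd_of_nonunit p hb with ⟨b0, rfl⟩
  rw [← mul_add] at hu
  exact p_nonunit p (isUnit_of_mul_isUnit_left hu)


variable (p : ℕ) [Fact p.Prime]

-- augmentation
noncomputable def eps : Rgrp p →ₐ[Zsub p] Zsub p :=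
  MonoidAlgebra.lift (Zsub p) (Zsub p) (Cp p) 1

lemma eps_of (g : Cp p) : eps p (MonoidAlgebra.of (Zsub p) (Cp p) g) = 1 := by
  simp [eps]

noncomputable def chi : Rgrp p →+* IsLocalRing.ResidueField (Zsub p) :=
  (IsLocalRing.residue (Zsub p)).comp (eps p).toRingHom

lemma chi_surj : Function.Surjective (chi p) := by
  apply (IsLocalRing.residue_surjective).comp
  intro a
  exact ⟨algebraMap (Zsub p) (Rgrp p) a, by simp [eps]⟩

lemma ker_chi_max : (RingHom.ker (chi p)).IsMaximal :=
  RingHom.ker_isMaximal_of_surjective _ (chi_surj p)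

-- every element of Cp p is a power of sigma
lemma cp_pow (g : Cp p) : g = (sigmaGen p) ^ (Multiplicative.toAdd g).val := by
  haveI : NeZero p := ⟨(Fact.out (p := p.Prime)).pos.ne'⟩
  rw [sigmaGen, ← ofAdd_nsmul]
  rw [nsmul_eq_mul, mul_one]
  have := ZMod.natCast_rightInverse (n := p) (Multiplicative.toAdd g)
  rw [this]
  rfl

noncomputable def sigR : Rgrp p := MonoidAlgebra.of (Zsub p) (Cp p) (sigmaGen p)

lemma of_sub_one_mem (g : Cp p) :
    MonoidAlgebra.of (Zsub p) (Cp p) g - 1 ∈ Ideal.span {1 - sigR p} := by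
  rw [show Ideal.span {1 - sigR p} = Ideal.span {sigR p - 1} by
    rw [show (1 : Rgrp p) - sigR p = -(sigR p - 1) by ring, Ideal.span_singleton_neg]]
  obtain ⟨k, hk⟩ : ∃ k : ℕ, g = (sigmaGen p) ^ k := ⟨_, cp_pow p g⟩
  rw [hk, map_pow]
  rw [Ideal.mem_span_singleton]
  exact ⟨∑ i ∈ Finset.range k, (sigR p) ^ i, by rw [mul_comm]; exact (geom_sum_mul _ _).symm⟩

lemma sub_eps_mem (x : Rgrp p) :
    x - algebraMap (Zsub p) (Rgrp p) (eps p x) ∈ Ideal.span {1 - sigR p} := by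
  induction x using MonoidAlgebra.induction_on with
  | of g => rw [eps_of, map_one]; exact of_sub_one_mem p g
  | add f g hf hg =>
      rw [map_add, map_add]
      have := Ideal.add_mem _ hf hg
      convert this using 1; ring
  | smul r f hf =>
      rw [map_smul, Algebra.smul_def, Algebra.smul_def, map_mul]
      have harw : algebraMap (Zsub p) (Rgrp p) ((algebraMap (Zsub p) (Zsub p)) r) =
          algebraMap (Zsub p) (Rgrp p) r := by simp
      rw [harw, ← mul_sub]
      exact Ideal.mul_mem_left _ _ hf

lemma span_p_ne_top : Ideal.span {((p:ℕ) : Rgrp p)} ≠ ⊤ := by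
  intro h
  rw [Ideal.span_singleton_eq_top] at h
  apply p_nonunit p
  have := h.map (eps p)
  rwa [map_natCast] at this

lemma pow_p_mem_span_p (g : Cp p) :
    (MonoidAlgebra.of (Zsub p) (Cp p) g - 1) ^ p ∈ Ideal.span {((p:ℕ) : Rgrp p)} := by
  have hp : p.Prime := Fact.out
  haveI : NeZero p := ⟨hp.pos.ne'⟩
  set I := Ideal.span {((p:ℕ) : Rgrp p)}
  haveI : Nontrivial (Rgrp p ⧸ I) := Ideal.Quotient.nontrivial_iff.mpr (span_p_ne_top p)
  have hpz : ((p:ℕ) : Rgrp p ⧸ I) = 0 := by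
    rw [← map_natCast (Ideal.Quotient.mk I), Ideal.Quotient.eq_zero_iff_mem]
    exact Ideal.subset_span rfl
  have hchar : ringChar (Rgrp p ⧸ I) = p := by
    have hdvd : ringChar (Rgrp p ⧸ I) ∣ p := ringChar.dvd hpz
    rcases (Nat.Prime.eq_one_or_self_of_dvd hp _ hdvd) with h1 | h1
    · exact absurd h1 CharP.ringChar_ne_one
    · exact h1
  haveI : CharP (Rgrp p ⧸ I) p := by
    have := ringChar.charP (Rgrp p ⧸ I)
    rwa [hchar] at this
  rw [← Ideal.Quotient.eq_zero_iff_mem, map_pow, map_sub, map_one]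
  have hsp := sub_pow_char (p := p)
    ((Ideal.Quotient.mk I) (MonoidAlgebra.of (Zsub p) (Cp p) g)) (1 : Rgrp p ⧸ I)
  have hg : g ^ p = 1 := by
    have : g = Multiplicative.ofAdd (Multiplicative.toAdd g) := rfl
    rw [this, ← ofAdd_nsmul, nsmul_eq_mul]
    norm_num [ZMod.natCast_self]
  rw [hsp, ← map_pow, ← map_pow, hg, map_one, map_one]
  rw [one_pow (M := Rgrp p ⧸ I) p, sub_self]

lemma ker_chi_eq : RingHom.ker (chi p) = Ideal.span {((p:ℕ) : Rgrp p), 1 - sigR p} := by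
  apply le_antisymm
  · intro x hx
    rw [RingHom.mem_ker, chi] at hx
    have hx' : eps p x ∈ IsLocalRing.maximalIdeal (Zsub p) := by
      rwa [← Ideal.Quotient.eq_zero_iff_mem]
    have hnon : ¬ IsUnit (eps p x) := hx'
    obtain ⟨c, hc⟩ := p_dvd_of_nonunit p hnon
    have h1 : algebraMap (Zsub p) (Rgrp p) (eps p x) ∈
        Ideal.span {((p:ℕ) : Rgrp p), 1 - sigR p} := by
      rw [hc, map_mul, map_natCast]
      exact Ideal.mul_mem_right _ _ (Ideal.subset_span (by simp))
    have h2 : x - algebraMap (Zsub p) (Rgrp p) (eps p x) ∈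
        Ideal.span {((p:ℕ) : Rgrp p), 1 - sigR p} := by
      apply Ideal.span_mono (Set.singleton_subset_iff.2 (by simp)) (sub_eps_mem p x)
    simpa using Ideal.add_mem _ h2 h1
  · rw [Ideal.span_le]
    rintro y (rfl | rfl)
    · rw [SetLike.mem_coe, RingHom.mem_ker, chi, RingHom.comp_apply]
      rw [show (eps p).toRingHom ((p:ℕ) : Rgrp p) = ((p:ℕ) : Zsub p) from map_natCast _ p]
      exact Ideal.Quotient.eq_zero_iff_mem.mpr (p_nonunit p)
    · rw [SetLike.mem_coe, RingHom.mem_ker, chi, RingHom.comp_apply]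
      have : (eps p).toRingHom (1 - sigR p) = 0 := by
        rw [map_sub, map_one]
        show 1 - eps p (sigR p) = 0
        rw [sigR, eps_of, sub_self]
      rw [this, map_zero]

noncomputable instance : Fintype (Cp p) :=
  haveI : NeZero p := ⟨(Fact.out (p := p.Prime)).pos.ne'⟩
  inferInstanceAs (Fintype (Multiplicative (ZMod p)))

instance Rgrp_finite : Module.Finite (Zsub p) (Rgrp p) :=
  Module.Finite.of_basis (MonoidAlgebra.basis (Cp p) (Zsub p))

lemma maximal_eq (M : Ideal (Rgrp p)) (hM : M.IsMaximal) : M = RingHom.ker (chi p) := by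
  haveI : Algebra.IsIntegral (Zsub p) (Rgrp p) := Algebra.IsIntegral.of_finite _ _
  haveI := hM
  have hcom : (M.comap (algebraMap (Zsub p) (Rgrp p))).IsMaximal :=
    Ideal.isMaximal_comap_of_isIntegral_of_isMaximal M
  have hcomeq : M.comap (algebraMap (Zsub p) (Rgrp p)) = IsLocalRing.maximalIdeal (Zsub p) :=
    IsLocalRing.eq_maximalIdeal hcom
  have hpM : ((p:ℕ) : Rgrp p) ∈ M := by
    have : ((p:ℕ) : Zsub p) ∈ M.comap (algebraMap (Zsub p) (Rgrp p)) := by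
      rw [hcomeq]; exact p_nonunit p
    simpa using this
  have hsig : (1 : Rgrp p) - sigR p ∈ M := by
    have hpow : (sigR p - 1) ^ p ∈ M :=
      (Ideal.span_singleton_le_iff_mem M).2 hpM (pow_p_mem_span_p p (sigmaGen p))
    have := hM.isPrime.mem_of_pow_mem _ hpow
    simpa using M.neg_mem this
  have hle : RingHom.ker (chi p) ≤ M := by
    rw [ker_chi_eq, Ideal.span_le]
    rintro y (rfl | rfl)
    exacts [hpM, hsig]
  exact (Ideal.IsMaximal.eq_of_le (ker_chi_max p) hM.ne_top hle).symm

lemma Rgrp_local : IsLocalRing (Rgrp p) :=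
  IsLocalRing.of_unique_max_ideal ⟨RingHom.ker (chi p), ker_chi_max p,
    fun M hM => maximal_eq p M hM⟩

lemma jacobson_bot_eq :
    Ideal.jacobson (⊥ : Ideal (Rgrp p)) = Ideal.span {((p:ℕ) : Rgrp p), 1 - sigR p} := by
  haveI := Rgrp_local p
  rw [IsLocalRing.jacobson_eq_maximalIdeal (⊥ : Ideal (Rgrp p)) bot_ne_top,
    ← IsLocalRing.eq_maximalIdeal (ker_chi_max p), ker_chi_eq]


lemma one_sub_zeta_dvd_p : (1 - zetaT p) ∣ ((p:ℕ) : Tring p) := by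
  have hp : p.Prime := Fact.out
  set f := (Polynomial.cyclotomic p (Zsub p)).map
    (algebraMap (Zsub p) (Tring p)) with hf
  have h1 : f.eval 1 = ((p:ℕ) : Tring p) := by
    rw [hf, Polynomial.eval_one_map, Polynomial.eval_one_cyclotomic_prime]
    simp
  have h2 : f.eval (zetaT p) = 0 := by
    rw [hf, Polynomial.eval_map, AdjoinRoot.algebraMap_eq]
    exact AdjoinRoot.eval₂_root _
  have := Polynomial.sub_dvd_eval_sub 1 (zetaT p) f
  rwa [h1, h2, sub_zero] at this



/-- The group ring `R = ℤ_(p) C_p` is a local ring; its unique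
maximal ideal is its Jacobson radical `J(R)`, and under the embedding
`R ⊆ S ⊕ T = ℤ_(p) ⊕ ℤ_(p)[ζ_p]` (the `ℤ_(p)`-algebra map sending `σ` to
`(1, ζ_p)`) the Jacobson radical is carried onto `pS ⊕ πT`, where `π = 1 - ζ_p`. -/
theorem stmt3 (p : ℕ) [Fact p.Prime] :
    IsLocalRing (Rgrp p) ∧
    (Ideal.jacobson (⊥ : Ideal (Rgrp p))).IsMaximal ∧
    ∀ (φ : Rgrp p →ₐ[Zsub p] (Zsub p) × Tring p),
      φ (MonoidAlgebra.of (Zsub p) (Cp p) (sigmaGen p)) = (1, zetaT p) →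
      φ '' (Ideal.jacobson (⊥ : Ideal (Rgrp p)) : Set (Rgrp p)) =
        {q : (Zsub p) × Tring p |
          q.1 ∈ Ideal.span {(p : Zsub p)} ∧ q.2 ∈ Ideal.span {1 - zetaT p}} := by
  refine ⟨Rgrp_local p, ?_, ?_⟩
  · rw [jacobson_bot_eq, ← ker_chi_eq]
    exact ker_chi_max p
  · intro φ hφ
    obtain ⟨v, hv⟩ := one_sub_zeta_dvd_p p
    have hφp : φ ((p:ℕ) : Rgrp p) = (((p:ℕ) : Zsub p), ((p:ℕ) : Tring p)) := by
      rw [map_natCast]; rfl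
    have hφs : φ (1 - sigR p) = (0, 1 - zetaT p) := by
      rw [map_sub, map_one, sigR, hφ]
      apply Prod.ext <;> simp
    ext q
    constructor
    · rintro ⟨x, hx, rfl⟩
      rw [SetLike.mem_coe, jacobson_bot_eq, Ideal.mem_span_pair] at hx
      obtain ⟨a, b, rfl⟩ := hx
      rw [map_add, map_mul, map_mul, hφp, hφs]
      constructor
      · rw [Ideal.mem_span_singleton]
        simp only [Prod.fst_add, Prod.fst_mul]
        exact dvd_add (dvd_mul_left _ _) (by simp)
      · rw [Ideal.mem_span_singleton]
        simp only [Prod.snd_add, Prod.snd_mul]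
        exact dvd_add (Dvd.dvd.mul_left ⟨v, hv⟩ _) (dvd_mul_left _ _)
    · rintro ⟨ha, hb⟩
      rw [Ideal.mem_span_singleton] at ha hb
      obtain ⟨a0, ha0⟩ := ha
      obtain ⟨t, ht⟩ := hb
      -- surjectivity of snd ∘ φ
      have hsurj : ∀ s : Tring p, ∃ r : Rgrp p, (φ r).2 = s := by
        have hrange : (((AlgHom.snd (Zsub p) (Zsub p) (Tring p)).comp φ).range : Subalgebra (Zsub p) (Tring p)) = ⊤ := by
          rw [← top_le_iff, ← AdjoinRoot.adjoinRoot_eq_top (f := Polynomial.cyclotomic p (Zsub p))]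
          apply Algebra.adjoin_le
          rintro x rfl
          refine ⟨MonoidAlgebra.of (Zsub p) (Cp p) (sigmaGen p), ?_⟩
          show (AlgHom.snd (Zsub p) (Zsub p) (Tring p))
            (φ (MonoidAlgebra.of (Zsub p) (Cp p) (sigmaGen p))) = zetaT p
          rw [hφ]
          rfl
        intro s
        have : s ∈ (((AlgHom.snd (Zsub p) (Zsub p) (Tring p)).comp φ).range) := by
          rw [hrange]; trivial
        obtain ⟨r, hr⟩ := this
        exact ⟨r, hr⟩
      obtain ⟨r, hr⟩ := hsurj (t - v * algebraMap (Zsub p) (Tring p) a0)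
      refine ⟨((p:ℕ) : Rgrp p) * algebraMap (Zsub p) (Rgrp p) a0 + (1 - sigR p) * r, ?_, ?_⟩
      · rw [SetLike.mem_coe, jacobson_bot_eq, Ideal.mem_span_pair]
        exact ⟨algebraMap (Zsub p) (Rgrp p) a0, r, by ring⟩
      · rw [map_add, map_mul, map_mul, hφp, hφs]
        have hcomm : φ (algebraMap (Zsub p) (Rgrp p) a0) =
            (a0, algebraMap (Zsub p) (Tring p) a0) := by
          rw [AlgHom.commutes]; rfl
        rw [hcomm]
        apply Prod.ext
        · simp only [Prod.fst_add, Prod.fst_mul]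
          rw [ha0]; ring
        · simp only [Prod.snd_add, Prod.snd_mul]
          rw [hr, ht, hv]; ring
end
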